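/- arXiv:1603.04809 — 5 statements merged into one kernel-verified Lean document; each statement's English description precedes it below -/
import Mathlib

section
/- Let L ≥ 2 and j ∈ ℕ₀. There exists a constant C > 0, independent of j and x, such that |K^L_{π,j}(x)| ≤ C · min{ 1/(2^j|x|)^L , 1 } for all x ∈ [-π, π] with x ≠ 0, and consequently |K^L_{π,j}(x)| ≤ C* (1 + 2^j|x|)^{-L} for some constant C* > 0. -/
open Real Finset

/-- The normalized `sinc` function: `sin x / x` for `x ≠ 0`, and `1` at `0`. -/
noncomputable def sinc (x : ℝ) : ℝ := if x = 0 then 1 else Real.sin x / x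

/-- The kernel `K^L(x) = ∏_{ℓ=1}^L sinc(2^{-ℓ} x)`. -/
noncomputable def KL (L : ℕ) (x : ℝ) : ℝ := ∏ l ∈ Finset.Icc 1 L, _root_.sinc (x / 2 ^ l)

/-- The `2π`-periodization of `K^L(2^j ·)`. -/
noncomputable def KLper (L j : ℕ) (x : ℝ) : ℝ := ∑' k : ℤ, KL L (2 ^ j * (x + 2 * Real.pi * k))

lemma abs_sinc_le_one (x : ℝ) : |_root_.sinc x| ≤ 1 := by
  unfold _root_.sinc
  split_ifs with h
  · simp
  · rw [abs_div]
    exact div_le_one_of_le₀ (Real.abs_sin_lt_abs h).le (abs_nonneg x)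

lemma abs_sinc_le_inv (x : ℝ) (hx : x ≠ 0) : |_root_.sinc x| ≤ |x|⁻¹ := by
  unfold _root_.sinc
  rw [if_neg hx, abs_div, ← one_div]
  gcongr
  exact Real.abs_sin_le_one x

lemma abs_KL_le_one (L : ℕ) (x : ℝ) : |KL L x| ≤ 1 := by
  unfold KL
  rw [Finset.abs_prod]
  exact Finset.prod_le_one (fun i _ => abs_nonneg _) (fun i _ => _root_.abs_sinc_le_one _)

lemma abs_KL_le (L : ℕ) (x : ℝ) (hx : x ≠ 0) : |KL L x| ≤ 2 ^ (L * L) / |x| ^ L := by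
  unfold KL
  rw [Finset.abs_prod]
  have h : ∀ l ∈ Finset.Icc 1 L, |_root_.sinc (x / 2 ^ l)| ≤ 2 ^ L / |x| := by
    intro l hl
    obtain ⟨hl1, hl2⟩ := Finset.mem_Icc.mp hl
    have hx2 : x / 2 ^ l ≠ 0 := by positivity
    refine (abs_sinc_le_inv _ hx2).trans ?_
    rw [abs_div, abs_of_pos (by positivity : (0:ℝ) < 2 ^ l), inv_div]
    gcongr
    exact one_le_two
  calc ∏ l ∈ Finset.Icc 1 L, |_root_.sinc (x / 2 ^ l)|
      ≤ ∏ l ∈ Finset.Icc 1 L, ((2:ℝ) ^ L / |x|) :=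
        Finset.prod_le_prod (fun i _ => abs_nonneg _) h
    _ = ((2:ℝ) ^ L / |x|) ^ L := by rw [Finset.prod_const, Nat.card_Icc]; norm_num
    _ = 2 ^ (L * L) / |x| ^ L := by rw [div_pow, ← pow_mul]

/-- the comparison weights -/
noncomputable def gw (L : ℕ) (k : ℤ) : ℝ := 1 / (max 1 |(k : ℝ)|) ^ L

lemma gw_nonneg (L : ℕ) (k : ℤ) : 0 ≤ gw L k := by unfold gw; positivity

lemma gw_summable (L : ℕ) (hL : 2 ≤ L) : Summable (gw L) := by
  have hnat : Summable (fun n : ℕ => gw L n) := by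
    have h1 : Summable (fun n : ℕ => (2:ℝ) ^ L * (1 / ((n:ℝ) + 1) ^ L)) := by
      apply Summable.mul_left
      have := (Real.summable_one_div_nat_pow (p := L)).mpr (by omega)
      have := (summable_nat_add_iff (f := fun n : ℕ => 1 / (n:ℝ) ^ L) 1).mpr this
      refine this.congr fun n => by push_cast; ring
    refine h1.of_nonneg_of_le (fun n => gw_nonneg L n) (fun n => ?_)
    have h1m : (1:ℝ) ≤ max 1 |((n:ℤ):ℝ)| := le_max_left _ _
    have hmax : ((n:ℝ) + 1) ≤ 2 * max 1 |((n:ℤ):ℝ)| := by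
      have h2 : (n:ℝ) ≤ max 1 |((n:ℤ):ℝ)| := by
        refine le_trans ?_ (le_max_right _ _)
        push_cast
        exact le_abs_self _
      linarith
    unfold gw
    rw [mul_one_div, div_le_div_iff₀ (by positivity) (by positivity), one_mul]
    calc ((n:ℝ)+1)^L ≤ (2 * max 1 |((n:ℤ):ℝ)|)^L := pow_le_pow_left₀ (by positivity) hmax L
      _ = 2^L * (max 1 |((n:ℤ):ℝ)|)^L := by rw [mul_pow]
  refine Summable.of_nat_of_neg hnat (hnat.congr fun n => ?_)
  unfold gw
  simp

lemma abs_tsum_le_mul (L : ℕ) (hL : 2 ≤ L) {f : ℤ → ℝ} (c : ℝ) (hc : 0 ≤ c)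
    (h : ∀ k, |f k| ≤ c * gw L k) : |∑' k, f k| ≤ c * ∑' k, gw L k := by
  have hg := gw_summable L hL
  have habs : Summable fun k => |f k| :=
    (hg.mul_left c).of_nonneg_of_le (fun k => abs_nonneg _) h
  calc |∑' k, f k| ≤ ∑' k, |f k| := by
        simpa [Real.norm_eq_abs] using norm_tsum_le_tsum_norm (f := f) (by simpa [Real.norm_eq_abs] using habs)
    _ ≤ ∑' k, c * gw L k := Summable.tsum_le_tsum h habs (hg.mul_left c)
    _ = c * ∑' k, gw L k := tsum_mul_left

lemma term_bound (L j : ℕ) (x : ℝ) (hx : |x| ≤ π) (hx0 : x ≠ 0) (k : ℤ) :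
    |KL L (2 ^ j * (x + 2 * π * k))| ≤
      2 ^ (L*L) * min (1 / ((2:ℝ) ^ j * |x|) ^ L) 1 * gw L k := by
  have hB : (1:ℝ) ≤ 2 ^ (L*L) := one_le_pow₀ one_le_two
  have ht : (0:ℝ) < (2:ℝ) ^ j * |x| := by
    have := abs_pos.mpr hx0; positivity
  have h2j : (1:ℝ) ≤ 2 ^ j := one_le_pow₀ one_le_two
  rcases eq_or_ne k 0 with rfl | hk
  · have hg : gw L 0 = 1 := by simp [gw]
    rw [hg, mul_one]
    have harg : (2:ℝ) ^ j * (x + 2 * π * (0:ℤ)) = 2 ^ j * x := by push_cast; ring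
    rw [harg]
    rcases min_cases (1 / ((2:ℝ) ^ j * |x|) ^ L) 1 with ⟨hm, _⟩ | ⟨hm, hm1⟩
    · rw [hm]
      have hne : (2:ℝ) ^ j * x ≠ 0 := by positivity
      have := abs_KL_le L ((2:ℝ)^j * x) hne
      rwa [abs_mul, abs_of_pos (by positivity : (0:ℝ) < (2:ℝ)^j), div_eq_mul_one_div] at this
    · rw [hm, mul_one]
      exact (abs_KL_le_one L _).trans hB
  · have hk1 : (1:ℝ) ≤ |(k:ℝ)| := by
      rw [← Int.cast_abs]; exact_mod_cast Int.one_le_abs hk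
    have hg : gw L k = 1 / |(k:ℝ)| ^ L := by
      unfold gw; rw [max_eq_right hk1]
    have hpi := Real.pi_gt_three
    have hsum : π * |(k:ℝ)| ≤ |x + 2 * π * k| := by
      have h2 : |2*π*(k:ℝ)| ≤ |x + 2*π*k| + |x| := by
        calc |2*π*(k:ℝ)| = |(x + 2*π*k) + (-x)| := by ring_nf
          _ ≤ |x + 2*π*k| + |(-x)| := abs_add_le _ _
          _ = |x + 2*π*k| + |x| := by rw [abs_neg]
      have h3 : |2*π*(k:ℝ)| = 2*π*|(k:ℝ)| := by
        rw [abs_mul, abs_of_pos (by positivity : (0:ℝ) < 2*π)]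
      nlinarith
    have hyabs : |(2:ℝ) ^ j * (x + 2 * π * k)| = 2 ^ j * |x + 2*π*k| := by
      rw [abs_mul, abs_of_pos (by positivity : (0:ℝ) < (2:ℝ)^j)]
    have hypos : (0:ℝ) < |x + 2*π*k| := by nlinarith
    have hyne : (2:ℝ) ^ j * (x + 2 * π * k) ≠ 0 := by
      intro h
      rw [← abs_eq_zero, hyabs] at h
      nlinarith
    have hKL := abs_KL_le L _ hyne
    rw [hg]
    rcases min_cases (1 / ((2:ℝ) ^ j * |x|) ^ L) 1 with ⟨hm, _⟩ | ⟨hm, _⟩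
    · rw [hm]
      refine hKL.trans ?_
      have hle : ((2:ℝ)^j * |x|) * |(k:ℝ)| ≤ |(2:ℝ) ^ j * (x + 2 * π * k)| := by
        rw [hyabs]
        have : |x| * |(k:ℝ)| ≤ π * |(k:ℝ)| := by nlinarith
        calc (2:ℝ)^j * |x| * |(k:ℝ)| = 2^j * (|x| * |(k:ℝ)|) := by ring
          _ ≤ 2^j * (π * |(k:ℝ)|) := by nlinarith
          _ ≤ 2^j * |x + 2*π*k| := by nlinarith
      have hpow : (((2:ℝ)^j * |x|) * |(k:ℝ)|) ^ L ≤ |(2:ℝ) ^ j * (x + 2 * π * k)| ^ L :=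
        pow_le_pow_left₀ (by positivity) hle L
      rw [mul_one_div, mul_one_div, div_div, ← mul_pow]
      gcongr
    · rw [hm, mul_one]
      refine hKL.trans ?_
      have hle : |(k:ℝ)| ≤ |(2:ℝ) ^ j * (x + 2 * π * k)| := by
        rw [hyabs]; nlinarith
      have hpow : |(k:ℝ)| ^ L ≤ |(2:ℝ) ^ j * (x + 2 * π * k)| ^ L :=
        pow_le_pow_left₀ (by positivity) hle L
      rw [mul_one_div]
      gcongr

lemma term_bound0 (L j : ℕ) (k : ℤ) :
    |KL L (2 ^ j * ((0:ℝ) + 2 * π * k))| ≤ 2 ^ (L*L) * gw L k := by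
  have hB : (1:ℝ) ≤ 2 ^ (L*L) := one_le_pow₀ one_le_two
  have h2j : (1:ℝ) ≤ 2 ^ j := one_le_pow₀ one_le_two
  have hpi := Real.pi_gt_three
  rcases eq_or_ne k 0 with rfl | hk
  · have hg : gw L 0 = 1 := by simp [gw]
    rw [hg, mul_one]
    exact (abs_KL_le_one L _).trans hB
  · have hk1 : (1:ℝ) ≤ |(k:ℝ)| := by
      rw [← Int.cast_abs]; exact_mod_cast Int.one_le_abs hk
    have hg : gw L k = 1 / |(k:ℝ)| ^ L := by
      unfold gw; rw [max_eq_right hk1]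
    have hyabs : |(2:ℝ) ^ j * ((0:ℝ) + 2 * π * k)| = 2 ^ j * (2*π*|(k:ℝ)|) := by
      rw [abs_mul, abs_of_pos (by positivity : (0:ℝ) < (2:ℝ)^j), zero_add, abs_mul,
        abs_of_pos (by positivity : (0:ℝ) < 2*π)]
    have hkpos : (0:ℝ) < |(k:ℝ)| := lt_of_lt_of_le one_pos hk1
    have hyne : (2:ℝ) ^ j * ((0:ℝ) + 2 * π * k) ≠ 0 := by
      intro h
      rw [← abs_eq_zero, hyabs] at h
      exact absurd h (by positivity)
    have hKL := abs_KL_le L _ hyne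
    rw [hg]
    refine hKL.trans ?_
    have hle : |(k:ℝ)| ≤ |(2:ℝ) ^ j * ((0:ℝ) + 2 * π * k)| := by
      rw [hyabs]
      have h6 : |(k:ℝ)| ≤ 2*π*|(k:ℝ)| := by
        nlinarith [mul_nonneg (by linarith : (0:ℝ) ≤ 2*π-1) (by linarith : (0:ℝ) ≤ |(k:ℝ)|)]
      have h7 : 2*π*|(k:ℝ)| ≤ 2^j * (2*π*|(k:ℝ)|) :=
        le_mul_of_one_le_left (by positivity) h2j
      exact h6.trans h7
    have hpow : |(k:ℝ)| ^ L ≤ |(2:ℝ) ^ j * ((0:ℝ) + 2 * π * k)| ^ L :=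
      pow_le_pow_left₀ (by positivity) hle L
    rw [mul_one_div]
    gcongr

theorem KLper_decay (L : ℕ) (hL : 2 ≤ L) :
    (∃ C > (0 : ℝ), ∀ j : ℕ, ∀ x ∈ Set.Icc (-Real.pi) Real.pi, x ≠ 0 →
        |KLper L j x| ≤ C * min (1 / ((2 : ℝ) ^ j * |x|) ^ L) 1) ∧
    (∃ Cs > (0 : ℝ), ∀ j : ℕ, ∀ x ∈ Set.Icc (-Real.pi) Real.pi,
        |KLper L j x| ≤ Cs * (1 + (2 : ℝ) ^ j * |x|) ^ (-(L : ℤ))) := by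
  set S := ∑' k, gw L k with hS
  have hS1 : (1:ℝ) ≤ S := by
    have hg0 : gw L 0 = 1 := by simp [gw]
    have h := Summable.le_tsum (gw_summable L hL) 0 (fun k _ => gw_nonneg L k)
    rwa [hg0] at h
  have hB : (1:ℝ) ≤ 2 ^ (L*L) := one_le_pow₀ one_le_two
  set C := (2:ℝ) ^ (L*L) * S with hC
  have hCpos : 0 < C := by positivity
  have hC1 : (1:ℝ) ≤ C := by nlinarith
  have main : ∀ j : ℕ, ∀ x ∈ Set.Icc (-Real.pi) Real.pi, x ≠ 0 →
      |KLper L j x| ≤ C * min (1 / ((2 : ℝ) ^ j * |x|) ^ L) 1 := by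
    intro j x hx hx0
    have hxpi : |x| ≤ π := abs_le.mpr ⟨hx.1, hx.2⟩
    have hm0 : (0:ℝ) ≤ min (1 / ((2 : ℝ) ^ j * |x|) ^ L) 1 := by
      refine le_min (by positivity) one_pos.le
    have := abs_tsum_le_mul L hL (2 ^ (L*L) * min (1 / ((2 : ℝ) ^ j * |x|) ^ L) 1)
      (by positivity) (term_bound L j x hxpi hx0)
    refine le_trans this (le_of_eq ?_)
    rw [hC]; ring
  constructor
  · exact ⟨C, hCpos, main⟩
  · refine ⟨2 ^ L * C, by positivity, ?_⟩
    intro j x hx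
    have hzp : ((1:ℝ) + 2 ^ j * |x|) ^ (-(L:ℤ)) = (((1:ℝ) + 2 ^ j * |x|) ^ L)⁻¹ := by
      rw [zpow_neg, zpow_natCast]
    rw [hzp]
    by_cases hx0 : x = 0
    · subst hx0
      have hbound := abs_tsum_le_mul L hL ((2:ℝ) ^ (L*L)) (by positivity) (term_bound0 L j)
      have h2L : (1:ℝ) ≤ 2 ^ L := one_le_pow₀ one_le_two
      simp only [abs_zero, mul_zero, add_zero, one_pow, inv_one, mul_one]
      calc |KLper L j 0| ≤ 2 ^ (L*L) * S := hbound
        _ = C := hC.symm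
        _ ≤ 2 ^ L * C := by nlinarith
    · have h1 := main j x hx hx0
      have ht : (0:ℝ) < (2:ℝ) ^ j * |x| := by
        have := abs_pos.mpr hx0; positivity
      set t := (2:ℝ) ^ j * |x| with htt
      have hmin : min (1 / t ^ L) 1 ≤ 2 ^ L * ((1 + t) ^ L)⁻¹ := by
        rcases le_total t 1 with h | h
        · have hp : (1+t)^L ≤ 2^L := pow_le_pow_left₀ (by positivity) (by linarith) L
          calc min (1 / t ^ L) 1 ≤ 1 := min_le_right _ _
            _ ≤ 2 ^ L * ((1 + t) ^ L)⁻¹ := by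
                rw [← div_eq_mul_inv, le_div_iff₀ (by positivity)]
                linarith
        · have hp : (1+t)^L ≤ (2*t)^L := pow_le_pow_left₀ (by positivity) (by linarith) L
          calc min (1 / t ^ L) 1 ≤ 1 / t ^ L := min_le_left _ _
            _ ≤ 2 ^ L * ((1 + t) ^ L)⁻¹ := by
                rw [← div_eq_mul_inv, div_le_div_iff₀ (by positivity) (by positivity)]
                calc 1 * (1+t)^L ≤ (2*t)^L := by rw [one_mul]; exact hp
                  _ = 2 ^ L * t ^ L := mul_pow 2 t L
      calc |KLper L j x| ≤ C * min (1 / t ^ L) 1 := h1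
        _ ≤ C * (2 ^ L * ((1 + t) ^ L)⁻¹) := by
            exact mul_le_mul_of_nonneg_left hmin hCpos.le
        _ = 2 ^ L * C * ((1 + t) ^ L)⁻¹ := by ring
end

section
/- For L ≥ 2 and j ∈ ℕ₀, the periodized kernel satisfies the fundamental interpolation property K^L_{π,j}(2πu/2^j) = δ_{0,u} for all integers u with -2^{j-1} ≤ u ≤ 2^{j-1}-1. -/
open Real Finset

/-- The sampling grid indices on level `j`: the integers `u` with
`-2^{j-1} ≤ u ≤ 2^{j-1}-1` (interpreted as `{0}` when `j = 0`). -/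
noncomputable def dyadicGrid (j : ℕ) : Finset ℤ :=
  if j = 0 then {0} else Finset.Icc (-(2 ^ (j - 1) : ℤ)) ((2 : ℤ) ^ (j - 1) - 1)

lemma KL_zero (L : ℕ) : KL L 0 = 1 := by
  unfold KL
  simp [_root_.sinc]

lemma KL_two_pi_int (L : ℕ) (hL : 1 ≤ L) (m : ℤ) (hm : m ≠ 0) :
    KL L (2 * Real.pi * m) = 0 := by
  unfold KL
  apply Finset.prod_eq_zero (i := 1) (by simp [hL])
  have hx : (2 * Real.pi * m) / 2 ^ 1 = Real.pi * m := by ring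
  rw [hx]
  have hne : Real.pi * m ≠ 0 := by
    apply mul_ne_zero Real.pi_ne_zero
    exact_mod_cast hm
  rw [_root_.sinc, if_neg hne, mul_comm]
  simp [Real.sin_int_mul_pi]

lemma arg_eq (j : ℕ) (u k : ℤ) :
    (2:ℝ) ^ j * (2 * Real.pi * u / 2 ^ j + 2 * Real.pi * k) =
      2 * Real.pi * ((u + 2 ^ j * k : ℤ) : ℝ) := by
  have h : (2:ℝ) ^ j ≠ 0 := by positivity
  push_cast
  field_simp

theorem KLper_fundamental_interpolant (L : ℕ) (hL : 2 ≤ L) (j : ℕ)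
    (u : ℤ) (hu : u ∈ dyadicGrid j) :
    KLper L j (2 * Real.pi * u / 2 ^ j) = if u = 0 then 1 else 0 := by
  have hL1 : 1 ≤ L := le_trans (by norm_num) hL
  unfold KLper
  have key : ∀ k : ℤ, KL L (2 ^ j * (2 * Real.pi * u / 2 ^ j + 2 * Real.pi * k)) =
      KL L (2 * Real.pi * ((u + 2 ^ j * k : ℤ) : ℝ)) := fun k => by rw [arg_eq]
  by_cases hu0 : u = 0
  · subst hu0
    simp only [if_pos rfl]
    rw [tsum_eq_single 0]
    · rw [key 0]; norm_num; exact KL_zero L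
    · intro k hk
      rw [key k]
      apply KL_two_pi_int L hL1
      simp only [zero_add]
      exact mul_ne_zero (by positivity) hk
  · rw [if_neg hu0]
    have hne : ∀ k : ℤ, u + 2 ^ j * k ≠ 0 := by
      intro k h
      have hdvd : (2:ℤ) ^ j ∣ u := ⟨-k, by linarith⟩
      have hle : (2:ℤ) ^ j ≤ |u| := Int.le_of_dvd (abs_pos.mpr hu0) ((dvd_abs _ _).mpr hdvd)
      have hj : j ≠ 0 := by
        intro hj0
        subst hj0
        simp [dyadicGrid] at hu
        exact hu0 hu
      rw [dyadicGrid, if_neg hj, Finset.mem_Icc] at hu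
      have habs : |u| ≤ 2 ^ (j - 1) := abs_le.mpr ⟨hu.1, by linarith [hu.2]⟩
      have hlt : (2:ℤ) ^ (j - 1) < 2 ^ j := by
        apply pow_lt_pow_right₀ (by norm_num)
        omega
      linarith
    have : ∀ k : ℤ, KL L (2 ^ j * (2 * Real.pi * u / 2 ^ j + 2 * Real.pi * k)) = 0 := by
      intro k
      rw [key k]
      exact KL_two_pi_int L hL1 _ (hne k)
    simp [this]
end

section
/- Second derivative of the cotangent series: for every real x not an integer multiple of 2π, ∑_{k∈ℤ} 1/(x+2πk)² = 1/(4 sin²(x/2)). -/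
open Real MeasureTheory

private lemma coeff_calc (x : ℝ) (hx : ∀ n : ℤ, x ≠ 2 * Real.pi * n) (n : ℤ) :
    fourierCoeff (AddCircle.liftIoc 1 0 (fun t : ℝ => Complex.exp (x * t * Complex.I))) n
      = (Complex.exp (x * Complex.I) - 1) / (((x:ℂ) - 2 * Real.pi * n) * Complex.I) := by
  haveI : Fact (0 < (1:ℝ)) := ⟨one_pos⟩
  rw [fourierCoeff_liftIoc_eq, fourierCoeffOn_eq_integral]
  have hcne : ((x : ℂ) - 2 * Real.pi * n) * Complex.I ≠ 0 := by
    refine mul_ne_zero (sub_ne_zero.2 fun h => hx n ?_) Complex.I_ne_zero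
    exact_mod_cast h
  have h1 : ∀ t : ℝ, (fourier (-n) (t : AddCircle ((0:ℝ) + 1 - 0))) • Complex.exp (x * t * Complex.I)
      = Complex.exp ((((x : ℂ) - 2 * Real.pi * n) * Complex.I) * t) := by
    intro t
    rw [fourier_coe_apply, smul_eq_mul, ← Complex.exp_add]
    congr 1
    push_cast
    ring_nf
  simp only [h1]
  rw [integral_exp_mul_complex hcne]
  have h2 : Complex.exp ((((x:ℂ) - 2 * Real.pi * n) * Complex.I)) = Complex.exp (x * Complex.I) := by
    rw [show (((x:ℂ) - 2 * Real.pi * n) * Complex.I) = x * Complex.I + (-n) * (2 * Real.pi * Complex.I) by ring,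
      Complex.exp_add, show (-(n:ℂ)) * (2 * Real.pi * Complex.I) = ((-n : ℤ) : ℂ) * (2 * Real.pi * Complex.I) by push_cast; ring,
      Complex.exp_int_mul_two_pi_mul_I, mul_one]
  norm_num [h2]

private lemma norm_calc (x : ℝ) (n : ℤ) :
    ‖(Complex.exp (x * Complex.I) - 1) / (((x:ℂ) - 2 * Real.pi * n) * Complex.I)‖ ^ 2
      = 4 * Real.sin (x/2)^2 * (1 / (x - 2*Real.pi*n)^2) := by
  have e1 : ((x:ℂ) - 2 * Real.pi * n) = ((x - 2*Real.pi*n : ℝ) : ℂ) := by push_cast; ring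
  rw [e1, norm_div, norm_mul, Complex.norm_I, mul_one, Complex.norm_real, div_pow]
  have e2 : ‖Complex.exp (x * Complex.I) - 1‖ ^ 2 = 2 - 2 * Real.cos x := by
    rw [Complex.sq_norm, Complex.normSq_apply]
    simp [Complex.exp_ofReal_mul_I_re, Complex.exp_ofReal_mul_I_im]
    nlinarith [Real.sin_sq_add_cos_sq x]
  have e3 : 2 - 2 * Real.cos x = 4 * Real.sin (x/2)^2 := by
    have h1 := Real.cos_sq_add_sin_sq (x/2)
    have h2 := Real.cos_two_mul (x/2)
    rw [show 2*(x/2) = x by ring] at h2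
    nlinarith
  rw [e2, e3, Real.norm_eq_abs, sq_abs]
  ring

theorem tsum_inv_sq_shifted (x : ℝ) (hx : ∀ n : ℤ, x ≠ 2 * Real.pi * n) :
    ∑' k : ℤ, 1 / (x + 2 * Real.pi * k) ^ 2 = 1 / (4 * Real.sin (x / 2) ^ 2) := by
  haveI : Fact (0 < (1:ℝ)) := ⟨one_pos⟩
  have hs : Real.sin (x / 2) ≠ 0 := by
    intro h
    obtain ⟨n, hn⟩ := Real.sin_eq_zero_iff.mp h
    exact hx n (by rw [show (2:ℝ) * Real.pi * n = 2 * (n * Real.pi) by ring, hn]; ring)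
  set f : ℝ → ℂ := fun t => Complex.exp (x * t * Complex.I) with hf
  set g : AddCircle (1:ℝ) → ℂ := AddCircle.liftIoc 1 0 f with hgdef
  have hgm : Measurable g := by
    have hfc : Continuous f := by
      apply Complex.continuous_exp.comp
      exact (continuous_const.mul Complex.continuous_ofReal).mul continuous_const
    have h1 : Measurable ((Set.Ioc (0:ℝ) (0+1)).restrict f) :=
      hfc.measurable.comp measurable_subtype_coe
    have h2 : Measurable (⇑(AddCircle.equivIoc (1:ℝ) 0)) :=
      (AddCircle.measurableEquivIoc (1:ℝ) 0).measurable
    exact h1.comp h2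
  have hgnorm : ∀ z, ‖g z‖ = 1 := by
    intro z
    show ‖f ((AddCircle.equivIoc 1 0 z : ℝ))‖ = 1
    set t : ℝ := (AddCircle.equivIoc 1 0 z : ℝ)
    show ‖Complex.exp (x * t * Complex.I)‖ = 1
    rw [show (x:ℂ) * (t:ℂ) = ((x*t : ℝ) : ℂ) by push_cast; ring,
      Complex.norm_exp_ofReal_mul_I]
  have hmem : MemLp g 2 (@AddCircle.haarAddCircle 1 _) :=
    MemLp.of_bound hgm.aestronglyMeasurable 1 (Filter.Eventually.of_forall fun z => (hgnorm z).le)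
  set F : Lp ℂ 2 (@AddCircle.haarAddCircle 1 _) := hmem.toLp g with hF
  have hpar := tsum_sq_fourierCoeff F
  have hcoe : ∀ n : ℤ, fourierCoeff (F : AddCircle (1:ℝ) → ℂ) n = fourierCoeff g n := by
    intro n
    unfold fourierCoeff
    apply integral_congr_ae
    filter_upwards [hmem.coeFn_toLp] with t ht
    rw [ht]
  have hR : (∫ t : AddCircle (1:ℝ), ‖F t‖^2 ∂AddCircle.haarAddCircle) = 1 := by
    rw [integral_congr_ae (g := fun _ => (1:ℝ))]
    · simp
    · filter_upwards [hmem.coeFn_toLp] with t ht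
      rw [ht, hgnorm t, one_pow]
  rw [hR] at hpar
  have key : ∑' n : ℤ, (4 * Real.sin (x/2)^2) * (1 / (x - 2*Real.pi*n)^2) = 1 := by
    have hterm : ∀ n : ℤ, (4 * Real.sin (x/2)^2) * (1 / (x - 2*Real.pi*n)^2)
        = ‖fourierCoeff (F : AddCircle (1:ℝ) → ℂ) n‖ ^ 2 := by
      intro n
      rw [hcoe n, hgdef, hf, coeff_calc x hx n, norm_calc x n]
    exact (tsum_congr hterm).trans hpar
  rw [tsum_mul_left] at key
  have h4 : (4 : ℝ) * Real.sin (x/2)^2 ≠ 0 := by positivity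
  have hsum : ∑' n : ℤ, 1 / (x - 2*Real.pi*n)^2 = 1 / (4 * Real.sin (x/2)^2) :=
    eq_one_div_of_mul_eq_one_left (by rw [mul_comm]; exact key)
  calc ∑' k : ℤ, 1 / (x + 2 * Real.pi * k) ^ 2
      = ∑' k : ℤ, 1 / (x - 2*Real.pi*(((Equiv.neg ℤ) k : ℤ) : ℝ))^2 := by
        apply tsum_congr; intro k
        simp only [Equiv.neg_apply]
        push_cast
        ring_nf
    _ = ∑' n : ℤ, 1 / (x - 2*Real.pi*(n : ℝ))^2 :=
        (Equiv.neg ℤ).tsum_eq (fun n : ℤ => 1 / (x - 2*Real.pi*(n : ℝ))^2)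
    _ = 1 / (4 * Real.sin (x / 2) ^ 2) := hsum
end

section
/- Anisotropic hyperbolic-cross sum bound: let r = (r_1,…,r_d) ∈ ℝ^d and η = (η_1,…,η_d) satisfy 0 < r_1 = η_1 = … = r_μ = η_μ < r_{μ+1} ≤ … ≤ r_d and r_1 < η_s < r_s for s = μ+1,…,d. Then there is a constant C (independent of m) such that ∑_{j ∈ ℕ₀^d, (1/η_1) η·j > m} 2^{-r·j} ≤ C m^{μ-1} 2^{-r_1 m} for all m ≥ 1. -/
open Real Finset

lemma summable_aux (p : ℕ) {a : ℝ} (h0 : 0 < a) (h1 : a < 1) :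
    Summable fun k : ℕ => ((k : ℝ) + 1) ^ p * a ^ k := by
  have hg : Summable fun k : ℕ => (k : ℝ) ^ p * a ^ k :=
    summable_pow_mul_geometric_of_norm_lt_one p
      (by rw [Real.norm_eq_abs, abs_of_pos h0]; exact h1)
  have hg1 : Summable fun k : ℕ => ((k + 1 : ℕ) : ℝ) ^ p * a ^ (k + 1) :=
    (summable_nat_add_iff 1).2 hg
  have h2 := hg1.mul_left a⁻¹
  refine h2.congr fun k => ?_
  push_cast
  rw [pow_succ]
  field_simp

lemma summable_aux2 (p : ℕ) {a : ℝ} (h0 : 0 < a) (h1 : a < 1) :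
    Summable fun k : ℕ => ((k : ℝ) + 2) ^ p * a ^ k := by
  have hg1 : Summable fun k : ℕ => (((k + 1 : ℕ) : ℝ) + 1) ^ p * a ^ (k + 1) :=
    (summable_nat_add_iff 1).2 (summable_aux p h0 h1)
  have h2 := hg1.mul_left a⁻¹
  refine h2.congr fun k => ?_
  push_cast
  rw [pow_succ]
  field_simp
  ring

lemma tail_sum_one (p : ℕ) {a : ℝ} (h0 : 0 < a) (h1 : a < 1) (m : ℕ) (hm : 1 ≤ m) :
    ∑' k : ℕ, ((k : ℝ) + 1) ^ p * (if m ≤ k then a ^ k else 0) ≤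
      (∑' n : ℕ, ((n : ℝ) + 2) ^ p * a ^ n) * ((m : ℝ) ^ p * a ^ m) := by
  set F : ℕ → ℝ := fun k => ((k : ℝ) + 1) ^ p * (if m ≤ k then a ^ k else 0) with hF
  have hFnn : ∀ k, 0 ≤ F k := by
    intro k
    refine mul_nonneg (pow_nonneg (by positivity) _) ?_
    split <;> positivity
  have hinj : Function.Injective fun n : ℕ => m + n := fun x y h => by
    have h' : m + x = m + y := h
    omega
  have hre : ∑' n : ℕ, F (m + n) = ∑' k : ℕ, F k := by
    refine hinj.tsum_eq ?_
    intro k hk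
    have hne : F k ≠ 0 := hk
    have hkm : m ≤ k := by
      by_contra hh
      exact hne (by simp [hF, hh])
    exact ⟨k - m, by simp; omega⟩
  have hsum2 : Summable fun n : ℕ => ((n : ℝ) + 2) ^ p * a ^ n := summable_aux2 p h0 h1
  have hsumF : Summable F := by
    refine Summable.of_nonneg_of_le hFnn (fun k => ?_) (summable_aux p h0 h1)
    refine mul_le_mul_of_nonneg_left ?_ (pow_nonneg (by positivity) _)
    split
    · exact le_rfl
    · positivity
  have hm1 : (1 : ℝ) ≤ (m : ℝ) := by exact_mod_cast hm
  calc ∑' k : ℕ, F k = ∑' n : ℕ, F (m + n) := hre.symm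
    _ ≤ ∑' n : ℕ, ((n : ℝ) + 2) ^ p * a ^ n * ((m : ℝ) ^ p * a ^ m) := by
        refine Summable.tsum_le_tsum (fun n => ?_) (hsumF.comp_injective hinj) (hsum2.mul_right _)
        have hmn : m ≤ m + n := Nat.le_add_right m n
        simp only [hF, if_pos hmn]
        have hub : ((m + n : ℕ) : ℝ) + 1 ≤ (m : ℝ) * ((n : ℝ) + 2) := by
          push_cast
          nlinarith [Nat.cast_nonneg (α := ℝ) n]
        calc (((m + n : ℕ) : ℝ) + 1) ^ p * a ^ (m + n)
            ≤ ((m : ℝ) * ((n : ℝ) + 2)) ^ p * a ^ (m + n) := by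
              refine mul_le_mul_of_nonneg_right (pow_le_pow_left₀ (by positivity) hub p)
                (by positivity)
          _ = ((n : ℝ) + 2) ^ p * a ^ n * ((m : ℝ) ^ p * a ^ m) := by
              rw [mul_pow, pow_add]; ring
    _ = (∑' n : ℕ, ((n : ℝ) + 2) ^ p * a ^ n) * ((m : ℝ) ^ p * a ^ m) := tsum_mul_right

lemma tail_sum_two (p : ℕ) {a c : ℝ} (ha0 : 0 ≤ a) (hc0 : 0 ≤ c) (hc1 : c < 1)
    (m : ℕ) (hm : 1 ≤ m) :
    ∑' k : ℕ, ((k : ℝ) + 1) ^ p * (if k < m then a ^ m * c ^ (m - k) else 0) ≤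
      (1 - c)⁻¹ * ((m : ℝ) ^ p * a ^ m) := by
  rw [tsum_eq_sum (s := Finset.range m) (by
    intro k hk
    rw [Finset.mem_range] at hk
    simp [hk])]
  have step1 : ∑ k ∈ Finset.range m, ((k : ℝ) + 1) ^ p *
      (if k < m then a ^ m * c ^ (m - k) else 0) ≤
      ∑ k ∈ Finset.range m, (m : ℝ) ^ p * a ^ m * c ^ (m - k) := by
    refine Finset.sum_le_sum fun k hk => ?_
    rw [Finset.mem_range] at hk
    rw [if_pos hk]
    have hk1 : ((k : ℝ) + 1) ≤ (m : ℝ) := by exact_mod_cast hk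
    calc ((k : ℝ) + 1) ^ p * (a ^ m * c ^ (m - k))
        ≤ (m : ℝ) ^ p * (a ^ m * c ^ (m - k)) := by
          refine mul_le_mul_of_nonneg_right (pow_le_pow_left₀ (by positivity) hk1 p)
            (by positivity)
      _ = (m : ℝ) ^ p * a ^ m * c ^ (m - k) := by ring
  have step2 : ∑ k ∈ Finset.range m, c ^ (m - k) ≤ (1 - c)⁻¹ := by
    have hinj : Set.InjOn (fun k => m - k) (Finset.range m) := by
      intro k1 h1 k2 h2 h
      simp only [Finset.coe_range, Set.mem_Iio] at h1 h2
      have h' : m - k1 = m - k2 := h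
      omega
    rw [← Finset.sum_image (fun k h1 k' h2 h => hinj h1 h2 h)]
    calc ∑ l ∈ (Finset.range m).image (fun k => m - k), c ^ l
        ≤ ∑ l ∈ Finset.range (m + 1), c ^ l := by
          refine Finset.sum_le_sum_of_subset_of_nonneg ?_ fun l _ _ => pow_nonneg hc0 l
          intro l hl
          rw [Finset.mem_image] at hl
          obtain ⟨k, hk, rfl⟩ := hl
          rw [Finset.mem_range]
          omega
      _ ≤ (1 - c)⁻¹ := by
          have hs : Summable fun n : ℕ => c ^ n := summable_geometric_of_lt_one hc0 hc1
          calc ∑ l ∈ Finset.range (m + 1), c ^ l ≤ ∑' n : ℕ, c ^ n :=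
                Summable.sum_le_tsum _ (fun i _ => pow_nonneg hc0 i) hs
            _ = (1 - c)⁻¹ := tsum_geometric_of_lt_one hc0 hc1
  calc ∑ k ∈ Finset.range m, ((k : ℝ) + 1) ^ p *
        (if k < m then a ^ m * c ^ (m - k) else 0)
      ≤ ∑ k ∈ Finset.range m, (m : ℝ) ^ p * a ^ m * c ^ (m - k) := step1
    _ = (m : ℝ) ^ p * a ^ m * ∑ k ∈ Finset.range m, c ^ (m - k) := by
        rw [Finset.mul_sum]
    _ ≤ (m : ℝ) ^ p * a ^ m * (1 - c)⁻¹ := by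
        refine mul_le_mul_of_nonneg_left step2 (by positivity)
    _ = (1 - c)⁻¹ * ((m : ℝ) ^ p * a ^ m) := by ring


lemma geom_partial_le {w : ℝ} (h0 : 0 ≤ w) (h1 : w < 1) (N : ℕ) :
    ∑ n ∈ Finset.range N, w ^ n ≤ (1 - w)⁻¹ := by
  have hs : Summable fun n : ℕ => w ^ n := summable_geometric_of_lt_one h0 h1
  calc ∑ n ∈ Finset.range N, w ^ n ≤ ∑' n : ℕ, w ^ n :=
        Summable.sum_le_tsum _ (fun i _ => pow_nonneg h0 i) hs
    _ = (1 - w)⁻¹ := tsum_geometric_of_lt_one h0 h1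

lemma prod_geom_finset {ι : Type*} [Fintype ι] [DecidableEq ι] (w : ι → ℝ)
    (hw0 : ∀ i, 0 ≤ w i) (hw1 : ∀ i, w i < 1) (t : Finset (ι → ℕ)) :
    ∑ y ∈ t, ∏ i, w i ^ y i ≤ ∏ i, (1 - w i)⁻¹ := by
  classical
  set N : ℕ := (t.sup fun y => Finset.univ.sup y) + 1 with hN
  have hsub : t ⊆ Fintype.piFinset fun _ : ι => Finset.range N := by
    intro y hy
    rw [Fintype.mem_piFinset]
    intro i
    rw [Finset.mem_range, hN, Nat.lt_succ_iff]
    exact le_trans (Finset.le_sup (Finset.mem_univ i)) (Finset.le_sup hy)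
  calc ∑ y ∈ t, ∏ i, w i ^ y i
      ≤ ∑ y ∈ Fintype.piFinset fun _ : ι => Finset.range N, ∏ i, w i ^ y i := by
        refine Finset.sum_le_sum_of_subset_of_nonneg hsub fun y _ _ => ?_
        exact Finset.prod_nonneg fun i _ => pow_nonneg (hw0 i) _
    _ = ∏ i, ∑ n ∈ Finset.range N, w i ^ n := (Finset.prod_univ_sum _ _).symm
    _ ≤ ∏ i, (1 - w i)⁻¹ := by
        refine Finset.prod_le_prod (fun i _ => ?_) (fun i _ => geom_partial_le (hw0 i) (hw1 i) N)
        exact Finset.sum_nonneg fun n _ => pow_nonneg (hw0 i) n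

lemma aux_G {d μ : ℕ} (hμ : 1 ≤ μ) (T : Finset (Fin d)) (hT : T.card = μ)
    (w : Fin d → ℝ) (hw : ∀ i ∈ Tᶜ, 0 ≤ w i ∧ w i < 1)
    (φ : ℕ → ℝ) (hφ0 : ∀ k, 0 ≤ φ k)
    (hsum : Summable (fun k : ℕ => ((k : ℝ) + 1) ^ (μ - 1) * φ k))
    (s : Finset (Fin d → ℕ)) :
    ∑ j ∈ s, φ (∑ i ∈ T, j i) * ∏ i ∈ Tᶜ, w i ^ j i ≤
      (∑' k : ℕ, ((k : ℝ) + 1) ^ (μ - 1) * φ k) * ∏ i ∈ Tᶜ, (1 - w i)⁻¹ := by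
  classical
  obtain ⟨i₀, hi₀⟩ : T.Nonempty := Finset.card_pos.mp (by omega)
  set pp : (Fin d → ℕ) → ℕ × ({ i // i ∈ Tᶜ } → ℕ) :=
    fun j => (∑ i ∈ T, j i, fun i => j i.1) with hpp
  set H : ℕ × ({ i // i ∈ Tᶜ } → ℕ) → ℝ :=
    fun z => φ z.1 * ∏ i : { i // i ∈ Tᶜ }, w i.1 ^ z.2 i with hH
  have hHnn : ∀ z, 0 ≤ H z := by
    intro z
    refine mul_nonneg (hφ0 _) (Finset.prod_nonneg fun i _ => pow_nonneg ((hw i.1 i.2).1) _)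
  -- rewrite the sum
  have h1 : ∑ j ∈ s, φ (∑ i ∈ T, j i) * ∏ i ∈ Tᶜ, w i ^ j i = ∑ j ∈ s, H (pp j) := by
    refine Finset.sum_congr rfl fun j _ => ?_
    simp only [hH, hpp]
    congr 1
    exact (Finset.prod_coe_sort Tᶜ (fun i => w i ^ j i)).symm
  -- fiberwise
  have h2 : ∑ j ∈ s, H (pp j) =
      ∑ z ∈ s.image pp, ((s.filter fun j => pp j = z).card : ℝ) * H z := by
    rw [← Finset.sum_fiberwise_of_maps_to' (fun j hj => Finset.mem_image_of_mem pp hj) H]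
    refine Finset.sum_congr rfl fun z _ => ?_
    rw [Finset.sum_const, nsmul_eq_mul]
  -- card bound
  have hcard : ∀ z ∈ s.image pp, ((s.filter fun j => pp j = z).card : ℕ) ≤ (z.1 + 1) ^ (μ - 1) := by
    intro z _
    have hle : (s.filter fun j => pp j = z).card ≤
        Fintype.card ({ i // i ∈ T.erase i₀ } → Fin (z.1 + 1)) := by
      rw [← Finset.card_univ]
      refine Finset.card_le_card_of_injOn
        (fun j => fun i => (⟨min (j i.1) z.1, by simp [Nat.lt_succ_iff]⟩ : Fin (z.1 + 1)))
        (fun j _ => Finset.mem_univ _) ?_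
      intro j1 hj1 j2 hj2 heq
      simp only [Finset.coe_filter, Set.mem_setOf_eq] at hj1 hj2
      have hz1 : ∑ i ∈ T, j1 i = z.1 := congrArg Prod.fst hj1.2
      have hz2 : ∑ i ∈ T, j2 i = z.1 := congrArg Prod.fst hj2.2
      have hy1 : ∀ i : { i // i ∈ Tᶜ }, j1 i.1 = z.2 i := fun i =>
        congrFun (congrArg Prod.snd hj1.2) i
      have hy2 : ∀ i : { i // i ∈ Tᶜ }, j2 i.1 = z.2 i := fun i =>
        congrFun (congrArg Prod.snd hj2.2) i
      have hb1 : ∀ i ∈ T, j1 i ≤ z.1 := fun i hi =>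
        hz1 ▸ Finset.single_le_sum (fun x _ => Nat.zero_le _) hi
      have hb2 : ∀ i ∈ T, j2 i ≤ z.1 := fun i hi =>
        hz2 ▸ Finset.single_le_sum (fun x _ => Nat.zero_le _) hi
      have herase : ∀ i ∈ T.erase i₀, j1 i = j2 i := by
        intro i hi
        have h1' : min (j1 i) z.1 = j1 i := min_eq_left (hb1 i (Finset.mem_of_mem_erase hi))
        have h2' : min (j2 i) z.1 = j2 i := min_eq_left (hb2 i (Finset.mem_of_mem_erase hi))
        have hvv : min (j1 i) z.1 = min (j2 i) z.1 := by
          have h := congrFun heq ⟨i, hi⟩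
          simpa using congrArg Fin.val h
        omega
      funext i
      by_cases hiT : i ∈ T
      · by_cases hii : i = i₀
        · subst hii
          have e1 : j1 i + ∑ x ∈ T.erase i, j1 x = z.1 := by
            rw [Finset.add_sum_erase _ _ hiT]; exact hz1
          have e2 : j2 i + ∑ x ∈ T.erase i, j2 x = z.1 := by
            rw [Finset.add_sum_erase _ _ hiT]; exact hz2
          have : ∑ x ∈ T.erase i, j1 x = ∑ x ∈ T.erase i, j2 x :=
            Finset.sum_congr rfl herase
          omega
        · exact herase i (Finset.mem_erase.mpr ⟨hii, hiT⟩)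
      · have hic : i ∈ Tᶜ := Finset.mem_compl.mpr hiT
        rw [hy1 ⟨i, hic⟩, hy2 ⟨i, hic⟩]
    calc (s.filter fun j => pp j = z).card
        ≤ Fintype.card ({ i // i ∈ T.erase i₀ } → Fin (z.1 + 1)) := hle
      _ = (z.1 + 1) ^ (μ - 1) := by
          rw [Fintype.card_fun, Fintype.card_fin, Fintype.card_coe,
            Finset.card_erase_of_mem hi₀, hT]
  -- bound by weighted sum
  have h3 : ∑ z ∈ s.image pp, ((s.filter fun j => pp j = z).card : ℝ) * H z ≤
      ∑ z ∈ s.image pp, ((z.1 : ℝ) + 1) ^ (μ - 1) * H z := by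
    refine Finset.sum_le_sum fun z hz => ?_
    refine mul_le_mul_of_nonneg_right ?_ (hHnn z)
    have := hcard z hz
    calc ((s.filter fun j => pp j = z).card : ℝ) ≤ ((z.1 + 1) ^ (μ - 1) : ℕ) := by
          exact_mod_cast this
      _ = ((z.1 : ℝ) + 1) ^ (μ - 1) := by push_cast; ring
  -- expand H and factor over product set
  have h4 : ∑ z ∈ s.image pp, ((z.1 : ℝ) + 1) ^ (μ - 1) * H z ≤
      ∑ z ∈ ((s.image pp).image Prod.fst) ×ˢ ((s.image pp).image Prod.snd),
        ((z.1 : ℝ) + 1) ^ (μ - 1) * H z := by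
    refine Finset.sum_le_sum_of_subset_of_nonneg Finset.subset_product fun z _ _ => ?_
    exact mul_nonneg (pow_nonneg (by positivity) _) (hHnn z)
  have h5 : ∑ z ∈ ((s.image pp).image Prod.fst) ×ˢ ((s.image pp).image Prod.snd),
        ((z.1 : ℝ) + 1) ^ (μ - 1) * H z =
      (∑ k ∈ (s.image pp).image Prod.fst, ((k : ℝ) + 1) ^ (μ - 1) * φ k) *
        (∑ y ∈ (s.image pp).image Prod.snd, ∏ i : { i // i ∈ Tᶜ }, w i.1 ^ y i) := by
    rw [Finset.sum_product, Finset.sum_mul]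
    refine Finset.sum_congr rfl fun k _ => ?_
    rw [Finset.mul_sum]
    refine Finset.sum_congr rfl fun y _ => ?_
    simp only [hH]; ring
  have hA : ∑ k ∈ (s.image pp).image Prod.fst, ((k : ℝ) + 1) ^ (μ - 1) * φ k ≤
      ∑' k : ℕ, ((k : ℝ) + 1) ^ (μ - 1) * φ k :=
    Summable.sum_le_tsum _ (fun k _ => mul_nonneg (pow_nonneg (by positivity) _) (hφ0 k)) hsum
  have hB : ∑ y ∈ (s.image pp).image Prod.snd, ∏ i : { i // i ∈ Tᶜ }, w i.1 ^ y i ≤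
      ∏ i ∈ Tᶜ, (1 - w i)⁻¹ := by
    have := prod_geom_finset (fun i : { i // i ∈ Tᶜ } => w i.1)
      (fun i => (hw i.1 i.2).1) (fun i => (hw i.1 i.2).2)
      ((s.image pp).image Prod.snd)
    calc ∑ y ∈ (s.image pp).image Prod.snd, ∏ i : { i // i ∈ Tᶜ }, w i.1 ^ y i
        ≤ ∏ i : { i // i ∈ Tᶜ }, (1 - w i.1)⁻¹ := this
      _ = ∏ i ∈ Tᶜ, (1 - w i)⁻¹ := Finset.prod_coe_sort Tᶜ (fun i => (1 - w i)⁻¹)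
  have hAnn : 0 ≤ ∑ k ∈ (s.image pp).image Prod.fst, ((k : ℝ) + 1) ^ (μ - 1) * φ k :=
    Finset.sum_nonneg fun k _ => mul_nonneg (pow_nonneg (by positivity) _) (hφ0 k)
  have hBnn : 0 ≤ ∑ y ∈ (s.image pp).image Prod.snd, ∏ i : { i // i ∈ Tᶜ }, w i.1 ^ y i :=
    Finset.sum_nonneg fun y _ =>
      Finset.prod_nonneg fun i _ => pow_nonneg ((hw i.1 i.2).1) _
  calc ∑ j ∈ s, φ (∑ i ∈ T, j i) * ∏ i ∈ Tᶜ, w i ^ j i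
      = ∑ z ∈ s.image pp, ((s.filter fun j => pp j = z).card : ℝ) * H z := by rw [h1, h2]
    _ ≤ ∑ z ∈ s.image pp, ((z.1 : ℝ) + 1) ^ (μ - 1) * H z := h3
    _ ≤ _ := h4
    _ = _ := h5
    _ ≤ (∑' k : ℕ, ((k : ℝ) + 1) ^ (μ - 1) * φ k) * ∏ i ∈ Tᶜ, (1 - w i)⁻¹ :=
        mul_le_mul hA hB hBnn (le_trans hAnn hA)


set_option maxHeartbeats 1000000 in
theorem aniso_tail_sum_bound (d μ : ℕ) (hd : 0 < d) (hμ1 : 1 ≤ μ) (hμd : μ ≤ d)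
    (r η : Fin d → ℝ) (h0 : 0 < r ⟨0, hd⟩)
    (heq : ∀ i : Fin d, (i : ℕ) < μ → r i = r ⟨0, hd⟩ ∧ η i = r ⟨0, hd⟩)
    (hbig : ∀ i : Fin d, μ ≤ (i : ℕ) → r ⟨0, hd⟩ < η i ∧ η i < r i)
    (hmono : ∀ i i' : Fin d, μ ≤ (i : ℕ) → i ≤ i' → r i ≤ r i') :
    ∃ C > (0 : ℝ), ∀ m : ℕ, 1 ≤ m →
      (∑' j : Fin d → ℕ,
          if (m : ℝ) < (∑ i, η i * j i) / η ⟨0, hd⟩ then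
            (2 : ℝ) ^ (-(∑ i, r i * j i)) else 0)
        ≤ C * (m : ℝ) ^ (μ - 1) * (2 : ℝ) ^ (-(r ⟨0, hd⟩ * m)) := by
  classical
  set r0 : ℝ := r ⟨0, hd⟩ with hr0def
  have hη0 : η ⟨0, hd⟩ = r0 := (heq ⟨0, hd⟩ hμ1).2
  set T : Finset (Fin d) := Finset.univ.filter (fun i : Fin d => (i : ℕ) < μ) with hTdef
  have hTmem : ∀ i : Fin d, i ∈ T ↔ (i : ℕ) < μ := fun i => by simp [hTdef]
  have hTcmem : ∀ i : Fin d, i ∈ Tᶜ ↔ μ ≤ (i : ℕ) := fun i => by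
    simp [hTdef, Finset.mem_compl]
  have hTcard : T.card = μ := by
    have hmap : T = Finset.univ.map ⟨Fin.castLE hμd, Fin.castLE_injective hμd⟩ := by
      ext i
      simp only [hTdef, Finset.mem_filter, Finset.mem_univ, true_and, Finset.mem_map,
        Function.Embedding.coeFn_mk]
      constructor
      · intro hi
        exact ⟨⟨(i : ℕ), hi⟩, Fin.ext rfl⟩
      · rintro ⟨j, -, rfl⟩
        exact j.2
    rw [hmap, Finset.card_map, Finset.card_univ, Fintype.card_fin]
  have hS : ∀ i ∈ Tᶜ, r0 < η i ∧ η i < r i := fun i hi => hbig i ((hTcmem i).1 hi)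
  -- choose θ
  obtain ⟨θ, hθ1, hθ⟩ : ∃ θ : ℝ, 1 < θ ∧ ∀ i ∈ Tᶜ, θ * η i < r i := by
    by_cases hne : (Tᶜ : Finset (Fin d)).Nonempty
    · set ρ : ℝ := Tᶜ.inf' hne (fun i => r i / η i) with hρdef
      have hρ1 : 1 < ρ := by
        rw [hρdef, Finset.lt_inf'_iff]
        intro i hi
        have h := hS i hi
        have hηpos : 0 < η i := lt_trans h0 h.1
        rw [lt_div_iff₀ hηpos]
        linarith [h.2]
      have hmin : 1 < min ρ 2 := lt_min hρ1 one_lt_two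
      refine ⟨(1 + min ρ 2) / 2, by linarith, ?_⟩
      intro i hi
      have hle : ρ ≤ r i / η i := Finset.inf'_le _ hi
      have hηpos : 0 < η i := lt_trans h0 (hS i hi).1
      have hθρ : (1 + min ρ 2) / 2 < ρ := by
        have := min_le_left ρ 2
        linarith
      have : (1 + min ρ 2) / 2 < r i / η i := lt_of_lt_of_le hθρ hle
      calc (1 + min ρ 2) / 2 * η i < r i / η i * η i :=
            mul_lt_mul_of_pos_right this hηpos
        _ = r i := by field_simp
    · exact ⟨2, one_lt_two, fun i hi => absurd ⟨i, hi⟩ hne⟩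
  have hθ0 : 0 < θ := by linarith
  -- constants
  set a : ℝ := (2 : ℝ) ^ (-r0) with hadef
  have ha0 : 0 < a := rpow_pos_of_pos two_pos _
  have ha1 : a < 1 := rpow_lt_one_of_one_lt_of_neg one_lt_two (by linarith)
  set c : ℝ := (2 : ℝ) ^ (-((θ - 1) * r0)) with hcdef
  have hc0 : 0 < c := rpow_pos_of_pos two_pos _
  have hc1 : c < 1 := rpow_lt_one_of_one_lt_of_neg one_lt_two (by nlinarith)
  set p : Fin d → ℝ := fun i => (2 : ℝ) ^ (-(r i)) with hpdef
  set q : Fin d → ℝ := fun i => (2 : ℝ) ^ (θ * η i - r i) with hqdef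
  have hpw : ∀ i ∈ Tᶜ, 0 ≤ p i ∧ p i < 1 := by
    intro i hi
    have h := hS i hi
    exact ⟨(rpow_pos_of_pos two_pos _).le,
      rpow_lt_one_of_one_lt_of_neg one_lt_two (by linarith)⟩
  have hqw : ∀ i ∈ Tᶜ, 0 ≤ q i ∧ q i < 1 := by
    intro i hi
    have h := hθ i hi
    exact ⟨(rpow_pos_of_pos two_pos _).le,
      rpow_lt_one_of_one_lt_of_neg one_lt_two (by linarith)⟩
  set D1 : ℝ := ∑' n : ℕ, ((n : ℝ) + 2) ^ (μ - 1) * a ^ n with hD1def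
  set Q1 : ℝ := ∏ i ∈ Tᶜ, (1 - p i)⁻¹ with hQ1def
  set Q2 : ℝ := ∏ i ∈ Tᶜ, (1 - q i)⁻¹ with hQ2def
  have hD1nn : 0 ≤ D1 :=
    tsum_nonneg fun n => mul_nonneg (pow_nonneg (by positivity) _) (pow_nonneg ha0.le n)
  have hQ1nn : 0 ≤ Q1 :=
    Finset.prod_nonneg fun i hi => inv_nonneg.2 (by linarith [(hpw i hi).2])
  have hQ2nn : 0 ≤ Q2 :=
    Finset.prod_nonneg fun i hi => inv_nonneg.2 (by linarith [(hqw i hi).2])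
  have hcinv : 0 ≤ (1 - c)⁻¹ := inv_nonneg.2 (by linarith)
  refine ⟨D1 * Q1 + (1 - c)⁻¹ * Q2 + 1, by nlinarith, ?_⟩
  intro m hm
  set φ1 : ℕ → ℝ := fun k => if m ≤ k then a ^ k else 0 with hφ1def
  set φ2 : ℕ → ℝ := fun k => if k < m then a ^ m * c ^ (m - k) else 0 with hφ2def
  have hφ1nn : ∀ k, 0 ≤ φ1 k := by
    intro k; rw [hφ1def]; dsimp only; split <;> positivity
  have hφ2nn : ∀ k, 0 ≤ φ2 k := by
    intro k; rw [hφ2def]; dsimp only; split <;> positivity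
  have hsum1 : Summable fun k : ℕ => ((k : ℝ) + 1) ^ (μ - 1) * φ1 k := by
    refine Summable.of_nonneg_of_le
      (fun k => mul_nonneg (pow_nonneg (by positivity) _) (hφ1nn k))
      (fun k => ?_) (summable_aux (μ - 1) ha0 ha1)
    refine mul_le_mul_of_nonneg_left ?_ (pow_nonneg (by positivity) _)
    rw [hφ1def]; dsimp only; split
    · exact le_rfl
    · positivity
  have hsum2 : Summable fun k : ℕ => ((k : ℝ) + 1) ^ (μ - 1) * φ2 k := by
    refine summable_of_ne_finset_zero (s := Finset.range m) ?_
    intro k hk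
    rw [Finset.mem_range] at hk
    rw [hφ2def]
    simp [hk]
  set K : (Fin d → ℕ) → ℕ := fun j => ∑ i ∈ T, j i with hKdef
  have h2pow : ∀ (x : ℝ) (n : ℕ), ((2 : ℝ) ^ x) ^ n = (2 : ℝ) ^ (x * n) := by
    intro x n
    rw [← Real.rpow_natCast ((2 : ℝ) ^ x) n, ← Real.rpow_mul (by norm_num)]
  -- the pointwise bound
  have key : ∀ j : Fin d → ℕ,
      (if (m : ℝ) < (∑ i, η i * j i) / η ⟨0, hd⟩ then
          (2 : ℝ) ^ (-(∑ i, r i * j i)) else 0) ≤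
        φ1 (K j) * ∏ i ∈ Tᶜ, p i ^ j i + φ2 (K j) * ∏ i ∈ Tᶜ, q i ^ j i := by
    intro j
    have hg1nn : 0 ≤ φ1 (K j) * ∏ i ∈ Tᶜ, p i ^ j i :=
      mul_nonneg (hφ1nn _) (Finset.prod_nonneg fun i hi => pow_nonneg (hpw i hi).1 _)
    have hg2nn : 0 ≤ φ2 (K j) * ∏ i ∈ Tᶜ, q i ^ j i :=
      mul_nonneg (hφ2nn _) (Finset.prod_nonneg fun i hi => pow_nonneg (hqw i hi).1 _)
    by_cases hcond : (m : ℝ) < (∑ i, η i * j i) / η ⟨0, hd⟩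
    swap
    · rw [if_neg hcond]; linarith
    rw [if_pos hcond]
    -- basic sum splittings
    have hrsplit : ∑ i, r i * (j i : ℝ) = r0 * (K j : ℝ) + ∑ i ∈ Tᶜ, r i * j i := by
      rw [← Finset.sum_add_sum_compl T (fun i => r i * (j i : ℝ))]
      congr 1
      rw [hKdef]
      push_cast
      rw [Finset.mul_sum]
      refine Finset.sum_congr rfl fun i hi => ?_
      rw [(heq i ((hTmem i).1 hi)).1]
    have hηsplit : ∑ i, η i * (j i : ℝ) = r0 * (K j : ℝ) + ∑ i ∈ Tᶜ, η i * j i := by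
      rw [← Finset.sum_add_sum_compl T (fun i => η i * (j i : ℝ))]
      congr 1
      rw [hKdef]
      push_cast
      rw [Finset.mul_sum]
      refine Finset.sum_congr rfl fun i hi => ?_
      rw [(heq i ((hTmem i).1 hi)).2]
    have hcond' : r0 * (m : ℝ) < r0 * (K j : ℝ) + ∑ i ∈ Tᶜ, η i * j i := by
      rw [hη0, lt_div_iff₀ h0] at hcond
      rw [← hηsplit]
      linarith
    -- identity for the left side
    have hfj : (2 : ℝ) ^ (-(∑ i, r i * (j i : ℝ))) =
        a ^ K j * ∏ i ∈ Tᶜ, p i ^ j i := by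
      have hprod : ∏ i ∈ Tᶜ, p i ^ j i = (2 : ℝ) ^ (∑ i ∈ Tᶜ, -(r i) * (j i : ℝ)) := by
        rw [Real.rpow_sum_of_pos two_pos]
        refine Finset.prod_congr rfl fun i hi => ?_
        rw [hpdef]; dsimp only
        rw [h2pow]
      rw [hprod, hadef, h2pow, ← Real.rpow_add two_pos]
      congr 1
      have hns : ∑ i ∈ Tᶜ, -r i * (j i : ℝ) = -∑ i ∈ Tᶜ, r i * (j i : ℝ) := by
        rw [← Finset.sum_neg_distrib]
        exact Finset.sum_congr rfl fun i _ => by ring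
      rw [hrsplit, hns]
      ring
    rcases le_or_gt m (K j) with hKm | hKm
    · have : (2 : ℝ) ^ (-(∑ i, r i * (j i : ℝ))) = φ1 (K j) * ∏ i ∈ Tᶜ, p i ^ j i := by
        rw [hfj, hφ1def]; dsimp only; rw [if_pos hKm]
      rw [this]
      exact le_add_of_nonneg_right hg2nn
    · -- K j < m : use the q-side
      have ht : r0 * ((m : ℝ) - (K j : ℝ)) < ∑ i ∈ Tᶜ, η i * j i := by linarith
      have hcast : ((m - K j : ℕ) : ℝ) = (m : ℝ) - (K j : ℝ) := by
        rw [Nat.cast_sub hKm.le]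
      have hgj : φ2 (K j) * ∏ i ∈ Tᶜ, q i ^ j i =
          (2 : ℝ) ^ (-(r0 * (m : ℝ)) + -((θ - 1) * r0) * ((m : ℝ) - (K j : ℝ)) +
            ∑ i ∈ Tᶜ, (θ * η i - r i) * (j i : ℝ)) := by
        have hprod : ∏ i ∈ Tᶜ, q i ^ j i =
            (2 : ℝ) ^ (∑ i ∈ Tᶜ, (θ * η i - r i) * (j i : ℝ)) := by
          rw [Real.rpow_sum_of_pos two_pos]
          refine Finset.prod_congr rfl fun i hi => ?_
          rw [hqdef]; dsimp only
          rw [h2pow]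
        rw [hφ2def]; dsimp only; rw [if_pos hKm]
        rw [hprod, hadef, hcdef, h2pow, h2pow, hcast]
        rw [← Real.rpow_add two_pos, ← Real.rpow_add two_pos]
        congr 1
        ring
      have hexp : -(∑ i, r i * (j i : ℝ)) ≤
          -(r0 * (m : ℝ)) + -((θ - 1) * r0) * ((m : ℝ) - (K j : ℝ)) +
            ∑ i ∈ Tᶜ, (θ * η i - r i) * (j i : ℝ) := by
        have hqsum : ∑ i ∈ Tᶜ, (θ * η i - r i) * (j i : ℝ) =
            θ * (∑ i ∈ Tᶜ, η i * (j i : ℝ)) - ∑ i ∈ Tᶜ, r i * (j i : ℝ) := by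
          rw [Finset.mul_sum, ← Finset.sum_sub_distrib]
          refine Finset.sum_congr rfl fun i hi => by ring
        rw [hrsplit, hqsum]
        have hmul : θ * (r0 * ((m : ℝ) - (K j : ℝ))) ≤ θ * ∑ i ∈ Tᶜ, η i * (j i : ℝ) :=
          mul_le_mul_of_nonneg_left ht.le hθ0.le
        linarith
      have hle : (2 : ℝ) ^ (-(∑ i, r i * (j i : ℝ))) ≤
          φ2 (K j) * ∏ i ∈ Tᶜ, q i ^ j i := by
        rw [hgj]
        exact (Real.rpow_le_rpow_left_iff one_lt_two).mpr hexp
      have hzero : φ1 (K j) = 0 := by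
        rw [hφ1def]; dsimp only; rw [if_neg (by omega)]
      calc (2 : ℝ) ^ (-(∑ i, r i * (j i : ℝ))) ≤ φ2 (K j) * ∏ i ∈ Tᶜ, q i ^ j i := hle
        _ = φ1 (K j) * ∏ i ∈ Tᶜ, p i ^ j i + φ2 (K j) * ∏ i ∈ Tᶜ, q i ^ j i := by
            rw [hzero]; ring
  -- assemble
  have hRHSnn : 0 ≤ (D1 * Q1 + (1 - c)⁻¹ * Q2 + 1) * (m : ℝ) ^ (μ - 1) *
      (2 : ℝ) ^ (-(r0 * (m : ℝ))) := by
    have h1 : (0:ℝ) ≤ D1 * Q1 + (1 - c)⁻¹ * Q2 + 1 := by nlinarith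
    exact mul_nonneg (mul_nonneg h1 (pow_nonneg (Nat.cast_nonneg m) _))
      (Real.rpow_nonneg (by norm_num) _)
  refine tsum_le_of_sum_le' hRHSnn ?_
  intro s
  have ham : a ^ m = (2 : ℝ) ^ (-(r0 * (m : ℝ))) := by
    rw [hadef, h2pow]
    congr 1
    ring
  calc ∑ j ∈ s, (if (m : ℝ) < (∑ i, η i * j i) / η ⟨0, hd⟩ then
          (2 : ℝ) ^ (-(∑ i, r i * j i)) else 0)
      ≤ ∑ j ∈ s, (φ1 (K j) * ∏ i ∈ Tᶜ, p i ^ j i + φ2 (K j) * ∏ i ∈ Tᶜ, q i ^ j i) :=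
        Finset.sum_le_sum fun j _ => key j
    _ = ∑ j ∈ s, φ1 (K j) * ∏ i ∈ Tᶜ, p i ^ j i +
        ∑ j ∈ s, φ2 (K j) * ∏ i ∈ Tᶜ, q i ^ j i := Finset.sum_add_distrib
    _ ≤ (∑' k : ℕ, ((k : ℝ) + 1) ^ (μ - 1) * φ1 k) * Q1 +
        (∑' k : ℕ, ((k : ℝ) + 1) ^ (μ - 1) * φ2 k) * Q2 := by
        refine add_le_add ?_ ?_
        · exact aux_G hμ1 T hTcard p hpw φ1 hφ1nn hsum1 s
        · exact aux_G hμ1 T hTcard q hqw φ2 hφ2nn hsum2 s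
    _ ≤ (D1 * ((m : ℝ) ^ (μ - 1) * a ^ m)) * Q1 +
        ((1 - c)⁻¹ * ((m : ℝ) ^ (μ - 1) * a ^ m)) * Q2 := by
        refine add_le_add (mul_le_mul_of_nonneg_right ?_ hQ1nn)
          (mul_le_mul_of_nonneg_right ?_ hQ2nn)
        · exact tail_sum_one (μ - 1) ha0 ha1 m hm
        · exact tail_sum_two (μ - 1) ha0.le hc0.le hc1 m hm
    _ = (D1 * Q1 + (1 - c)⁻¹ * Q2) * ((m : ℝ) ^ (μ - 1) * a ^ m) := by ring
    _ ≤ (D1 * Q1 + (1 - c)⁻¹ * Q2 + 1) * ((m : ℝ) ^ (μ - 1) * a ^ m) := by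
        refine mul_le_mul_of_nonneg_right (by linarith) (by positivity)
    _ = (D1 * Q1 + (1 - c)⁻¹ * Q2 + 1) * (m : ℝ) ^ (μ - 1) *
        (2 : ℝ) ^ (-(r0 * (m : ℝ))) := by
        rw [ham]; ring
end

section
/- Anisotropic grid cardinality: let r ∈ ℝ^d with 0 < r_1 = … = r_μ < r_{μ+1} ≤ … ≤ r_d < ∞. Then ∑_{j ∈ ℕ₀^d, (1/r_1) r·j ≤ m} 2^{|j|_1} ≍ m^{μ-1} 2^m for all m ≥ 1, i.e., there exist constants c, C > 0 independent of m with c m^{μ-1} 2^m ≤ ∑_{(1/r_1) r·j ≤ m} 2^{|j|_1} ≤ C m^{μ-1} 2^m. -/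
open Real Finset

private lemma aniso_geom_aux (D : ℕ) : Summable (fun k : ℕ => ((k:ℝ)+1)^D * (1/2:ℝ)^k) := by
  have h0 : Summable (fun k : ℕ => (k:ℝ)^D * (1/2:ℝ)^k) :=
    summable_pow_mul_geometric_of_norm_lt_one D (by norm_num)
  have h1 : Summable (fun k : ℕ => ((k+1:ℕ):ℝ)^D * (1/2:ℝ)^(k+1)) :=
    (summable_nat_add_iff 1).2 h0
  refine (h1.mul_left 2).congr (fun k => ?_)
  push_cast
  ring

private lemma aniso_count_aux (d μ : ℕ) (hμ1 : 1 ≤ μ) (hμd : μ ≤ d) (m n K : ℕ)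
    (A' : Finset (Fin d → ℕ))
    (hbound : ∀ j ∈ A', ∀ i : Fin d, j i ≤ m)
    (htail : ∀ j ∈ A', ∀ i : Fin d, μ ≤ (i:ℕ) → j i ≤ K)
    (hsum : ∀ j ∈ A', ∑ i, j i = n) :
    A'.card ≤ (m+1)^(μ-1) * (K+1)^(d-μ) := by
  classical
  have hcard : ((Finset.univ : Finset ((Fin (μ-1) → Fin (m+1)) × (Fin (d-μ) → Fin (K+1)))).card)
      = (m+1)^(μ-1) * (K+1)^(d-μ) := by
    simp [Fintype.card_fun]
  rw [← hcard]
  apply Finset.card_le_card_of_injOn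
    (fun j => (fun a : Fin (μ-1) => (⟨min (j ⟨(a:ℕ), by have := a.isLt; omega⟩) m, by omega⟩ : Fin (m+1)),
               fun b : Fin (d-μ) => (⟨min (j ⟨μ + (b:ℕ), by have := b.isLt; omega⟩) K, by omega⟩ : Fin (K+1))))
  · intro j _; exact mem_univ _
  · intro j hj j' hj' hee
    have h1 := congrFun (congrArg Prod.fst hee)
    have h2 := congrFun (congrArg Prod.snd hee)
    have hco : ∀ i : Fin d, (i:ℕ) ≠ μ - 1 → j i = j' i := by
      intro i hi
      rcases lt_or_ge (i:ℕ) (μ-1) with h | h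
      · have := h1 ⟨(i:ℕ), h⟩
        simp only [Fin.mk.injEq] at this
        have hb1 : j ⟨(i:ℕ), by omega⟩ ≤ m := hbound j hj _
        have hb2 : j' ⟨(i:ℕ), by omega⟩ ≤ m := hbound j' hj' _
        have hii : (⟨(i:ℕ), by omega⟩ : Fin d) = i := by ext; simp
        rw [hii] at this hb1 hb2
        omega
      · have hge : μ ≤ (i:ℕ) := by omega
        have := h2 ⟨(i:ℕ) - μ, by have := i.isLt; omega⟩
        simp only [Fin.mk.injEq] at this
        have hii : (⟨μ + ((i:ℕ) - μ), by have := i.isLt; omega⟩ : Fin d) = i := by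
          ext; simp; omega
        rw [hii] at this
        have hb1 : j i ≤ K := htail j hj i hge
        have hb2 : j' i ≤ K := htail j' hj' i hge
        omega
    funext i
    rcases eq_or_ne ((i:ℕ)) (μ-1) with h | h
    · have hs1 := hsum j hj
      have hs2 := hsum j' hj'
      rw [← Finset.add_sum_erase _ _ (mem_univ i)] at hs1 hs2
      have : ∑ i' ∈ univ.erase i, j i' = ∑ i' ∈ univ.erase i, j' i' := by
        apply Finset.sum_congr rfl
        intro i' hi'
        apply hco
        intro hval
        exact (Finset.mem_erase.1 hi').1 (by ext; omega)
      omega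
    · exact hco i h

set_option maxHeartbeats 2000000 in
theorem aniso_grid_cardinality (d μ : ℕ) (hd : 0 < d) (hμ1 : 1 ≤ μ) (hμd : μ ≤ d)
    (r : Fin d → ℝ) (h0 : 0 < r ⟨0, hd⟩)
    (heq : ∀ i : Fin d, (i : ℕ) < μ → r i = r ⟨0, hd⟩)
    (hbig : ∀ i : Fin d, μ ≤ (i : ℕ) → r ⟨0, hd⟩ < r i)
    (hmono : ∀ i i' : Fin d, μ ≤ (i : ℕ) → i ≤ i' → r i ≤ r i') :
    ∃ c > (0 : ℝ), ∃ C > (0 : ℝ), ∀ m : ℕ, 1 ≤ m →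
      c * (m : ℝ) ^ (μ - 1) * 2 ^ m ≤
        (∑' j : Fin d → ℕ,
          if (∑ i, r i * j i) / r ⟨0, hd⟩ ≤ (m : ℝ) then
            (2 : ℝ) ^ (∑ i, j i) else 0) ∧
      (∑' j : Fin d → ℕ,
          if (∑ i, r i * j i) / r ⟨0, hd⟩ ≤ (m : ℝ) then
            (2 : ℝ) ^ (∑ i, j i) else 0) ≤ C * (m : ℝ) ^ (μ - 1) * 2 ^ m := by
  classical
  set R : ℝ := r ⟨0, hd⟩ with hRdef
  have hR : 0 < R := h0
  have hμ0 : 0 < μ := hμ1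
  have hge : ∀ i : Fin d, R ≤ r i := by
    intro i
    rcases lt_or_ge (i:ℕ) μ with h | h
    · exact (heq i h).ge
    · exact (hbig i h).le
  obtain ⟨δ, hδ0, hδ⟩ : ∃ δ : ℝ, 0 < δ ∧ ∀ i : Fin d, μ ≤ (i:ℕ) → R + δ ≤ r i := by
    by_cases h : μ < d
    · refine ⟨r ⟨μ, h⟩ - R, by simpa using sub_pos.2 (hbig ⟨μ, h⟩ (by simp)), ?_⟩
      intro i hi
      have : r ⟨μ, h⟩ ≤ r i := hmono ⟨μ, h⟩ i (by simp) (by exact hi)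
      linarith
    · exact ⟨1, one_pos, fun i hi => absurd hi (by omega)⟩
  -- key structural inequalities
  have key : ∀ (m : ℕ) (j : Fin d → ℕ), (∑ i, r i * (j i : ℝ)) ≤ (m:ℝ) * R →
      (R * (∑ i : Fin d, (j i : ℝ)) + δ * ∑ i ∈ univ.filter (fun i : Fin d => μ ≤ (i:ℕ)), (j i : ℝ)
        ≤ (m:ℝ) * R) := by
    intro m j hcond
    have h1 : ∀ i : Fin d, (R + if μ ≤ (i:ℕ) then δ else 0) * (j i : ℝ) ≤ r i * (j i : ℝ) := by
      intro i
      apply mul_le_mul_of_nonneg_right _ (by positivity)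
      split_ifs with h
      · exact hδ i h
      · simpa using hge i
    have h2 : (∑ i : Fin d, (R + if μ ≤ (i:ℕ) then δ else 0) * (j i : ℝ)) ≤ ∑ i, r i * (j i : ℝ) :=
      Finset.sum_le_sum (fun i _ => h1 i)
    have h3 : (∑ i : Fin d, (R + if μ ≤ (i:ℕ) then δ else 0) * (j i : ℝ))
        = R * (∑ i : Fin d, (j i : ℝ)) + δ * ∑ i ∈ univ.filter (fun i : Fin d => μ ≤ (i:ℕ)), (j i : ℝ) := by
      rw [Finset.mul_sum, Finset.mul_sum, Finset.sum_filter, ← Finset.sum_add_distrib]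
      refine Finset.sum_congr rfl (fun i _ => ?_)
      split_ifs with h <;> ring
    linarith [h3 ▸ h2]
  have keyb : ∀ (m : ℕ) (j : Fin d → ℕ), (∑ i, r i * (j i : ℝ)) ≤ (m:ℝ) * R →
      (∑ i, j i) ≤ m := by
    intro m j hcond
    have h2 := key m j hcond
    have h4 : (0:ℝ) ≤ ∑ i ∈ univ.filter (fun i : Fin d => μ ≤ (i:ℕ)), (j i : ℝ) :=
      Finset.sum_nonneg (fun i _ => by positivity)
    have h5 : R * (∑ i : Fin d, (j i : ℝ)) ≤ (m:ℝ) * R := by nlinarith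
    have h6 : (∑ i : Fin d, (j i : ℝ)) ≤ (m:ℝ) := by
      rw [mul_comm (m:ℝ) R] at h5
      exact le_of_mul_le_mul_left h5 hR
    rw [← Nat.cast_sum] at h6; exact_mod_cast h6
  have keya : ∀ (m : ℕ) (j : Fin d → ℕ), (∑ i, r i * (j i : ℝ)) ≤ (m:ℝ) * R →
      ∀ i, j i ≤ m := by
    intro m j hcond i
    have : (j i) ≤ ∑ i', j i' := Finset.single_le_sum (fun i' _ => Nat.zero_le _) (mem_univ i)
    exact le_trans this (keyb m j hcond)
  -- constants
  set D : ℕ := d - μ with hD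
  set CC : ℝ := ∑' k : ℕ, ((k:ℝ)+1)^D * (1/2:ℝ)^k with hCC
  have hCC1 : 1 ≤ CC := by
    have h := Summable.le_tsum (aniso_geom_aux D) 0 (fun i _ => by positivity)
    rw [hCC]
    exact le_trans (by norm_num) h
  set E : ℝ := R / δ + 1 with hE
  have hE1 : 1 ≤ E := by
    rw [hE]
    have : 0 ≤ R / δ := by positivity
    linarith
  refine ⟨(1/(μ:ℝ))^(μ-1), by positivity, 2^(μ-1) * E^D * CC, by positivity, ?_⟩
  intro m hm
  -- reduce tsum to a finite sum
  set B : Finset (Fin d → ℕ) := Fintype.piFinset (fun _ : Fin d => Finset.range (m+1)) with hB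
  have hts : (∑' j : Fin d → ℕ,
        if (∑ i, r i * (j i:ℝ)) / R ≤ (m:ℝ) then (2:ℝ) ^ (∑ i, j i) else 0)
      = ∑ j ∈ B, (if (∑ i, r i * (j i:ℝ)) ≤ (m:ℝ) * R then (2:ℝ) ^ (∑ i, j i) else 0) := by
    have hcongr : ∀ j : Fin d → ℕ,
        (if (∑ i, r i * (j i:ℝ)) / R ≤ (m:ℝ) then (2:ℝ) ^ (∑ i, j i) else 0)
        = (if (∑ i, r i * (j i:ℝ)) ≤ (m:ℝ) * R then (2:ℝ) ^ (∑ i, j i) else 0) := by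
      intro j
      congr 1
      exact propext (div_le_iff₀ hR)
    rw [tsum_congr hcongr]
    apply tsum_eq_sum
    intro j hj
    rw [if_neg]
    intro hc
    apply hj
    rw [hB, Fintype.mem_piFinset]
    intro i
    rw [Finset.mem_range]
    have := keya m j hc i
    omega
  rw [hts]
  constructor
  -- LOWER BOUND
  · set t : ℕ := m / μ + 1 with ht
    have htm : t - 1 ≤ m := by
      rw [ht]; simp; exact Nat.div_le_self m μ
    have hsv : ∀ v : Fin (μ-1) → Fin t, (∑ a, (v a : ℕ)) ≤ m := by
      intro v
      calc (∑ a, (v a : ℕ)) ≤ ∑ a : Fin (μ-1), (t-1) := by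
            apply Finset.sum_le_sum; intro a _
            have := (v a).isLt; omega
        _ = (μ-1) * (t-1) := by simp [Finset.sum_const, mul_comm]
        _ ≤ μ * (m / μ) := by
            rw [ht]; simp; exact Nat.mul_le_mul (by omega) (le_refl _)
        _ ≤ m := Nat.mul_div_le m μ
    set Φ : (Fin (μ-1) → Fin t) → (Fin d → ℕ) := fun v i =>
      if h : (i:ℕ) < μ - 1 then (v ⟨i, h⟩ : ℕ)
      else if (i:ℕ) = μ - 1 then m - (∑ a, (v a : ℕ)) else 0 with hΦ
    have hsum : ∀ v, ∑ i, Φ v i = m := by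
      intro v
      rw [← Finset.sum_filter_add_sum_filter_not univ (fun i : Fin d => (i:ℕ) < μ - 1)]
      have hA : (∑ i ∈ univ.filter (fun i : Fin d => (i:ℕ) < μ - 1), Φ v i)
          = ∑ a, (v a : ℕ) := by
        refine (Finset.sum_nbij (fun a : Fin (μ-1) => (⟨(a:ℕ), by have := a.isLt; omega⟩ : Fin d))
          ?_ ?_ ?_ ?_).symm
        · intro a _; simp [a.isLt]
        · intro a _ b _ hab
          simpa [Fin.ext_iff] using hab
        · intro i hi
          simp only [coe_filter, Set.mem_image, Set.mem_setOf_eq] at hi ⊢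
          exact ⟨⟨(i:ℕ), hi.2⟩, by simp, by ext; simp⟩
        · intro a _
          simp [hΦ, a.isLt]
      have hBn : (∑ i ∈ univ.filter (fun i : Fin d => ¬ (i:ℕ) < μ - 1), Φ v i)
          = m - (∑ a, (v a : ℕ)) := by
        rw [Finset.sum_eq_single_of_mem (⟨μ-1, by omega⟩ : Fin d)]
        · simp only [hΦ]
          rw [dif_neg (by simp), if_pos (by simp)]
        · simp only [mem_filter, mem_univ, true_and]
          omega
        · intro i hi hne
          simp only [mem_filter, mem_univ, true_and, not_lt] at hi
          have : (i:ℕ) ≠ μ - 1 := fun h => hne (by ext; simp [h])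
          simp only [hΦ]
          rw [dif_neg (by omega), if_neg this]
      rw [hA, hBn]
      have := hsv v
      omega
    have hΦinj : Function.Injective Φ := by
      intro v w hvw
      funext a
      have ha : (a : ℕ) < μ - 1 := a.isLt
      have had : (a : ℕ) < d := by omega
      have := congrFun hvw ⟨a, had⟩
      simp only [hΦ, had, ha, dif_pos] at this
      ext
      simpa using this
    have hΦle : ∀ v, ∀ i, Φ v i ≤ m := by
      intro v i
      simp only [hΦ]
      split_ifs with h1 h2
      · have : (v ⟨i, h1⟩ : ℕ) < t := (v ⟨i, h1⟩).isLt
        omega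
      · omega
      · omega
    have hΦcond : ∀ v, (∑ i : Fin d, r i * (Φ v i : ℝ)) = (m:ℝ) * R := by
      intro v
      have hpt : ∀ i : Fin d, r i * (Φ v i : ℝ) = R * (Φ v i : ℝ) := by
        intro i
        rcases lt_or_ge (i:ℕ) μ with h | h
        · rw [heq i h]
        · have : Φ v i = 0 := by
            simp only [hΦ]
            rw [dif_neg (by omega), if_neg (by omega)]
          simp [this]
      rw [Finset.sum_congr rfl (fun i _ => hpt i), ← Finset.mul_sum]
      rw [← Nat.cast_sum, hsum v]
      ring
    -- sum over the image
    have himg : Finset.univ.image Φ ⊆ B := by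
      intro j hj
      rw [Finset.mem_image] at hj
      obtain ⟨v, _, rfl⟩ := hj
      rw [hB, Fintype.mem_piFinset]
      intro i
      rw [Finset.mem_range]
      have := hΦle v i
      omega
    have h1 : ∑ j ∈ Finset.univ.image Φ, (if (∑ i, r i * (j i:ℝ)) ≤ (m:ℝ) * R then (2:ℝ) ^ (∑ i, j i) else 0)
        ≤ ∑ j ∈ B, (if (∑ i, r i * (j i:ℝ)) ≤ (m:ℝ) * R then (2:ℝ) ^ (∑ i, j i) else 0) := by
      apply Finset.sum_le_sum_of_subset_of_nonneg himg
      intro j _ _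
      split_ifs
      · positivity
      · exact le_refl 0
    have h2 : ∑ j ∈ Finset.univ.image Φ, (if (∑ i, r i * (j i:ℝ)) ≤ (m:ℝ) * R then (2:ℝ) ^ (∑ i, j i) else 0)
        = ((t:ℝ)^(μ-1)) * 2^m := by
      rw [Finset.sum_image (fun v _ w _ h => hΦinj h)]
      have hv : ∀ v : Fin (μ-1) → Fin t,
          (if (∑ i, r i * (Φ v i:ℝ)) ≤ (m:ℝ) * R then (2:ℝ) ^ (∑ i, Φ v i) else 0) = 2^m := by
        intro v
        rw [if_pos (le_of_eq (hΦcond v)), hsum v]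
      rw [Finset.sum_congr rfl (fun v _ => hv v), Finset.sum_const, Finset.card_univ,
        nsmul_eq_mul]
      have : Fintype.card (Fin (μ-1) → Fin t) = t^(μ-1) := by
        simp [Fintype.card_fun]
      rw [this]
      push_cast
      ring
    have hmt : (m:ℝ) / (μ:ℝ) ≤ (t:ℝ) := by
      have hnat : m < μ * t := by
        calc m = μ * (m / μ) + m % μ := (Nat.div_add_mod m μ).symm
          _ < μ * (m / μ) + μ := by have := Nat.mod_lt m hμ0; omega
          _ = μ * t := by rw [ht]; ring
      have hcast : (m:ℝ) < (μ:ℝ) * t := by exact_mod_cast hnat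
      rw [div_le_iff₀ (by exact_mod_cast hμ0)]
      nlinarith
    calc (1/(μ:ℝ))^(μ-1) * (m:ℝ)^(μ-1) * 2^m = ((m:ℝ)/(μ:ℝ))^(μ-1) * 2^m := by
          rw [← mul_pow]
          ring_nf
      _ ≤ (t:ℝ)^(μ-1) * 2^m := by
          apply mul_le_mul_of_nonneg_right _ (by positivity)
          exact pow_le_pow_left₀ (by positivity) hmt _
      _ = ∑ j ∈ Finset.univ.image Φ, (if (∑ i, r i * (j i:ℝ)) ≤ (m:ℝ) * R then (2:ℝ) ^ (∑ i, j i) else 0) := h2.symm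
      _ ≤ _ := h1
  · set A : Finset (Fin d → ℕ) := B.filter (fun j => (∑ i, r i * (j i:ℝ)) ≤ (m:ℝ) * R) with hA
    have hSA : ∑ j ∈ B, (if (∑ i, r i * (j i:ℝ)) ≤ (m:ℝ) * R then (2:ℝ) ^ (∑ i, j i) else 0)
        = ∑ j ∈ A, (2:ℝ) ^ (∑ i, j i) := by
      rw [hA, Finset.sum_filter]
    have hmaps : ∀ j ∈ A, (∑ i, j i) ∈ Finset.range (m+1) := by
      intro j hj
      rw [Finset.mem_range]
      have := keyb m j (Finset.mem_filter.1 hj).2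
      omega
    have hfib : ∑ j ∈ A, (2:ℝ) ^ (∑ i, j i)
        = ∑ n ∈ Finset.range (m+1), ∑ j ∈ A.filter (fun j => (∑ i, j i) = n), (2:ℝ) ^ (∑ i, j i) :=
      (Finset.sum_fiberwise_of_maps_to hmaps _).symm
    set K : ℕ → ℕ := fun n => ⌊R * ((m:ℝ) - n) / δ⌋₊ with hK
    have hcardn : ∀ n ∈ Finset.range (m+1),
        (A.filter (fun j => (∑ i, j i) = n)).card ≤ (m+1)^(μ-1) * (K n + 1)^(d-μ) := by
      intro n hn
      apply aniso_count_aux d μ hμ1 hμd m n (K n)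
      · intro j hj i
        have hjB : j ∈ B := (Finset.mem_filter.1 (Finset.mem_filter.1 hj).1).1
        rw [hB, Fintype.mem_piFinset] at hjB
        have := hjB i
        rw [Finset.mem_range] at this
        omega
      · intro j hj i hi
        obtain ⟨hjA, hjn⟩ := Finset.mem_filter.1 hj
        have hcond := (Finset.mem_filter.1 hjA).2
        have hk := key m j hcond
        have hsumn : (∑ i : Fin d, (j i : ℝ)) = (n:ℝ) := by
          rw [← Nat.cast_sum, hjn]
        rw [hsumn] at hk
        have htail : (j i : ℝ) ≤ ∑ i' ∈ univ.filter (fun i' : Fin d => μ ≤ (i':ℕ)), (j i' : ℝ) :=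
          Finset.single_le_sum (f := fun i' : Fin d => (j i' : ℝ)) (fun i' _ => by positivity)
            (by rw [Finset.mem_filter]; exact ⟨Finset.mem_univ i, hi⟩)
        have hδj : δ * (j i : ℝ) ≤ R * ((m:ℝ) - n) := by nlinarith
        have hle : (j i : ℝ) ≤ R * ((m:ℝ) - n) / δ := by
          rw [le_div_iff₀ hδ0]
          nlinarith
        exact Nat.le_floor hle
      · intro j hj
        exact (Finset.mem_filter.1 hj).2
    have hinner : ∀ n ∈ Finset.range (m+1),
        ∑ j ∈ A.filter (fun j => (∑ i, j i) = n), (2:ℝ) ^ (∑ i, j i)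
        = ((A.filter (fun j => (∑ i, j i) = n)).card : ℝ) * 2^n := by
      intro n hn
      rw [Finset.sum_congr rfl (fun j hj => by rw [(Finset.mem_filter.1 hj).2]),
        Finset.sum_const, nsmul_eq_mul]
    have hKE : ∀ n ∈ Finset.range (m+1), ((K n : ℝ) + 1) ≤ E * (((m-n:ℕ):ℝ) + 1) := by
      intro n hn
      rw [Finset.mem_range] at hn
      have hnm : n ≤ m := by omega
      have hmn0 : (0:ℝ) ≤ (m:ℝ) - n := by
        have : (n:ℝ) ≤ m := by exact_mod_cast hnm
        linarith
      have hfl : (K n : ℝ) ≤ R * ((m:ℝ) - n) / δ := by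
        rw [hK]
        exact Nat.floor_le (div_nonneg (mul_nonneg hR.le hmn0) hδ0.le)
      have hcastsub : ((m-n:ℕ):ℝ) = (m:ℝ) - n := by
        rw [Nat.cast_sub hnm]
      rw [hcastsub, hE]
      have hRδ : 0 ≤ R / δ := by positivity
      have : R * ((m:ℝ) - n) / δ = (R / δ) * ((m:ℝ) - n) := by ring
      rw [this] at hfl
      nlinarith
    have hrefl : ∑ n ∈ Finset.range (m+1), (((m-n:ℕ):ℝ) + 1)^D * (2:ℝ)^n
        = ∑ k ∈ Finset.range (m+1), ((k:ℝ) + 1)^D * (2:ℝ)^(m-k) := by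
      rw [← Finset.sum_range_reflect (fun n => (((m-n:ℕ):ℝ) + 1)^D * (2:ℝ)^n) (m+1)]
      apply Finset.sum_congr rfl
      intro k hk
      rw [Finset.mem_range] at hk
      have e1 : m + 1 - 1 - k = m - k := by omega
      have e2 : m - (m - k) = k := by omega
      rw [e1, e2]
    have hpow : ∀ k ∈ Finset.range (m+1), (2:ℝ)^(m-k) = 2^m * (1/2:ℝ)^k := by
      intro k hk
      rw [Finset.mem_range] at hk
      have h2 : (2:ℝ)^(m-k) * 2^k = 2^m := by
        rw [← pow_add]
        congr 1
        omega
      rw [one_div, inv_pow, ← div_eq_mul_inv, eq_div_iff (by positivity)]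
      exact h2
    have hgeo : ∑ k ∈ Finset.range (m+1), ((k:ℝ) + 1)^D * (1/2:ℝ)^k ≤ CC := by
      rw [hCC]
      exact Summable.sum_le_tsum _ (fun i _ => by positivity) (aniso_geom_aux D)
    rw [hSA, hfib, Finset.sum_congr rfl hinner]
    calc ∑ n ∈ Finset.range (m+1), ((A.filter (fun j => (∑ i, j i) = n)).card : ℝ) * 2^n
        ≤ ∑ n ∈ Finset.range (m+1), ((m+1:ℝ)^(μ-1) * (E * (((m-n:ℕ):ℝ) + 1))^D) * 2^n := by
          apply Finset.sum_le_sum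
          intro n hn
          apply mul_le_mul_of_nonneg_right _ (by positivity)
          calc ((A.filter (fun j => (∑ i, j i) = n)).card : ℝ)
              ≤ (((m+1)^(μ-1) * (K n + 1)^(d-μ) : ℕ) : ℝ) := by exact_mod_cast hcardn n hn
            _ = (m+1:ℝ)^(μ-1) * ((K n : ℝ) + 1)^D := by push_cast [hD]; ring
            _ ≤ (m+1:ℝ)^(μ-1) * (E * (((m-n:ℕ):ℝ) + 1))^D := by
                apply mul_le_mul_of_nonneg_left _ (by positivity)
                exact pow_le_pow_left₀ (by positivity) (hKE n hn) _
      _ = (m+1:ℝ)^(μ-1) * E^D * ∑ n ∈ Finset.range (m+1), (((m-n:ℕ):ℝ) + 1)^D * (2:ℝ)^n := by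
          rw [Finset.mul_sum]
          apply Finset.sum_congr rfl
          intro n _
          rw [mul_pow]
          ring
      _ = (m+1:ℝ)^(μ-1) * E^D * ∑ k ∈ Finset.range (m+1), ((k:ℝ) + 1)^D * (2:ℝ)^(m-k) := by
          rw [hrefl]
      _ = (m+1:ℝ)^(μ-1) * E^D * (2^m * ∑ k ∈ Finset.range (m+1), ((k:ℝ) + 1)^D * (1/2:ℝ)^k) := by
          have hh : ∑ k ∈ Finset.range (m+1), ((k:ℝ) + 1)^D * (2:ℝ)^(m-k)
              = 2^m * ∑ k ∈ Finset.range (m+1), ((k:ℝ) + 1)^D * (1/2:ℝ)^k := by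
            rw [Finset.mul_sum]
            refine Finset.sum_congr rfl (fun k hk => ?_)
            rw [hpow k hk]
            ring
          rw [hh]
      _ ≤ (m+1:ℝ)^(μ-1) * E^D * (2^m * CC) := by
          apply mul_le_mul_of_nonneg_left _ (by positivity)
          apply mul_le_mul_of_nonneg_left hgeo (by positivity)
      _ ≤ (2*(m:ℝ))^(μ-1) * E^D * (2^m * CC) := by
          apply mul_le_mul_of_nonneg_right _ (by positivity)
          apply mul_le_mul_of_nonneg_right _ (by positivity)
          apply pow_le_pow_left₀ (by positivity)
          have : (1:ℝ) ≤ m := by exact_mod_cast hm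
          linarith
      _ = 2^(μ-1) * E^D * CC * (m:ℝ)^(μ-1) * 2^m := by
          rw [mul_pow]
          ring
end
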